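/- The expected number of distinct requests not covered by group representatives equals N(1 - (1-1/N)^K) - (N/G)(1 - (1-G/N)^K), and this quantity is nonnegative whenever 1 ≤ G ≤ N. -/

import Mathlib

lemma key (u v g : ℝ) (K : ℕ) (hg : 0 ≤ g) (hv : 0 ≤ v) (hv1 : v ≤ 1) (hvu : v ≤ u)
    (heq : 1 - v = g * (1 - u)) : 1 - v ^ K ≤ g * (1 - u ^ K) := by
  have h1 : 1 - v ^ K = (1 - v) * ∑ i ∈ Finset.range K, v ^ i := by
    have := geom_sum_mul v K
    nlinarith [this]
  have h2 : 1 - u ^ K = (1 - u) * ∑ i ∈ Finset.range K, u ^ i := by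
    have := geom_sum_mul u K
    nlinarith [this]
  have hsum : ∑ i ∈ Finset.range K, v ^ i ≤ ∑ i ∈ Finset.range K, u ^ i :=
    Finset.sum_le_sum fun i _ => pow_le_pow_left₀ hv hvu i
  have hgu : 0 ≤ g * (1 - u) := by rw [← heq]; linarith
  calc 1 - v ^ K = (g * (1 - u)) * ∑ i ∈ Finset.range K, v ^ i := by rw [h1, heq]
    _ ≤ (g * (1 - u)) * ∑ i ∈ Finset.range K, u ^ i :=
        mul_le_mul_of_nonneg_left hsum hgu
    _ = g * (1 - u ^ K) := by rw [h2]; ring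

/-- The expected number of distinct requests not covered by group representatives
is nonnegative: `N(1-(1-1/N)^K) ≥ (N/G)(1-(1-G/N)^K)` when `1 ≤ G ≤ N` and `G ∣ N`. -/
theorem stmt_7 (N K G : ℕ) (hK : 1 ≤ K) (hG : 1 ≤ G) (hGN : G ≤ N) (hdvd : G ∣ N) :
    ((N : ℝ)/(G : ℝ)) * (1 - (1 - (G : ℝ)/(N : ℝ)) ^ K)
      ≤ (N : ℝ) * (1 - (1 - 1/(N : ℝ)) ^ K) := by
  have hN : (0:ℝ) < N := by
    exact_mod_cast Nat.lt_of_lt_of_le (Nat.lt_of_lt_of_le Nat.zero_lt_one hG) hGN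
  have hGpos : (0:ℝ) < G := by exact_mod_cast hG
  have hGNr : (G:ℝ) ≤ N := by exact_mod_cast hGN
  have hkey := key (1 - 1/(N:ℝ)) (1 - (G:ℝ)/N) G K hGpos.le
    (by rw [sub_nonneg]; exact div_le_one_of_le₀ hGNr hN.le)
    (by have : (0:ℝ) ≤ (G:ℝ)/N := by positivity
        linarith)
    (by have : (1:ℝ)/N ≤ (G:ℝ)/N := by
          gcongr
          exact_mod_cast hG
        linarith)
    (by field_simp; ring)
  calc ((N:ℝ)/G) * (1 - (1 - (G:ℝ)/N) ^ K)
      ≤ ((N:ℝ)/G) * ((G:ℝ) * (1 - (1 - 1/(N:ℝ)) ^ K)) := by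
        apply mul_le_mul_of_nonneg_left hkey (by positivity)
    _ = (N:ℝ) * (1 - (1 - 1/(N:ℝ)) ^ K) := by field_simp
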